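/- The maximal line segment in K containing the base [(0,0),(4,0)] is exactly [(0,0),(4,0)] itself; i.e., K contains no segment on the x-axis extending beyond [0,4] × {0}. -/

import Mathlib

open Set Complex

/-- `K` is the attractor (invariant nonempty compact set) of the system `S`. -/
def IsAttractor {X : Type*} [MetricSpace X] {m : ℕ} (S : Fin m → X → X) (K : Set X) : Prop :=
  K.Nonempty ∧ IsCompact K ∧ K = ⋃ i, S i '' K

/-- The five similarities of the main example, in the plane `ℝ² ≃ ℂ`:
`S₂ x = x/2 + (2,0)`, `S_k x = x/4 + a_k` for `a₁=(0,0)`, `a₃=(3,0)`,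
`a₄=(1,√3)`, `a₅=(3/2, 3√3/2)`. -/
noncomputable def mainS : Fin 5 → ℂ → ℂ :=
  ![fun w => w / 4,
    fun w => w / 2 + 2,
    fun w => w / 4 + 3,
    fun w => w / 4 + (1 + Real.sqrt 3 * Complex.I),
    fun w => w / 4 + (3 / 2 + (3 * Real.sqrt 3 / 2) * Complex.I)]

/-- The closed triangle with vertices `A=(0,0)`, `B=(2,2√3)`, `C=(4,0)`. -/
noncomputable def tri : Set ℂ :=
  convexHull ℝ {0, 2 + 2 * Real.sqrt 3 * Complex.I, 4}

/-- The closed vertical strip `0 ≤ re ≤ 4`. -/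
def Hset : Set ℂ := {z | 0 ≤ z.re ∧ z.re ≤ 4}

lemma Hset_closed : IsClosed Hset := by
  have : Hset = {z : ℂ | 0 ≤ z.re} ∩ {z : ℂ | z.re ≤ 4} := rfl
  rw [this]
  exact (isClosed_le continuous_const Complex.continuous_re).inter
    (isClosed_le Complex.continuous_re continuous_const)

lemma Hset_nonempty : Hset.Nonempty := ⟨0, by simp [Hset]⟩

lemma d4 (c a b : ℂ) : dist (a / 4 + c) (b / 4 + c) ≤ 1 / 2 * dist a b := by
  rw [dist_add_right, dist_eq_norm, div_sub_div_same, norm_div, dist_eq_norm]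
  have h4 : ‖(4 : ℂ)‖ = 4 := by norm_num
  rw [h4]
  have := norm_nonneg (a - b)
  linarith

lemma d2 (c a b : ℂ) : dist (a / 2 + c) (b / 2 + c) ≤ 1 / 2 * dist a b := by
  rw [dist_add_right, dist_eq_norm, div_sub_div_same, norm_div, dist_eq_norm]
  have h2 : ‖(2 : ℂ)‖ = 2 := by norm_num
  rw [h2]
  have := norm_nonneg (a - b)
  linarith

lemma mainS_lip (i : Fin 5) (a b : ℂ) :
    dist (mainS i a) (mainS i b) ≤ 1 / 2 * dist a b := by
  fin_cases i
  · simpa [mainS] using d4 0 a b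
  · exact d2 2 a b
  · exact d4 3 a b
  · exact d4 _ a b
  · exact d4 _ a b

lemma re_div4 (w : ℂ) : (w / 4).re = w.re / 4 := by
  have : (w / ((4 : ℝ) : ℂ)).re = w.re / 4 := Complex.div_ofReal_re w 4
  simpa using this

lemma re_div2 (w : ℂ) : (w / 2).re = w.re / 2 := by
  have : (w / ((2 : ℝ) : ℂ)).re = w.re / 2 := Complex.div_ofReal_re w 2
  simpa using this

lemma mainS_maps (i : Fin 5) {z : ℂ} (hz : z ∈ Hset) : mainS i z ∈ Hset := by
  obtain ⟨h1, h2⟩ := hz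
  fin_cases i <;>
    simp only [mainS, Matrix.cons_val_zero, Matrix.cons_val_one, Matrix.head_cons,
      Matrix.cons_val_two, Matrix.tail_cons, Matrix.cons_val_three, Matrix.cons_val_four,
      Hset, Set.mem_setOf_eq, Complex.add_re, re_div4, re_div2] <;>
    constructor <;>
    simp [Complex.add_re, Complex.mul_re, Complex.I_re, Complex.I_im,
      Complex.ofReal_re, Complex.ofReal_im, Complex.div_re, Complex.normSq] <;>
    norm_num <;> linarith

lemma K_subset_H (K : Set ℂ) (hK : IsAttractor mainS K) : K ⊆ Hset := by
  obtain ⟨hne, hcomp, heq⟩ := hK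
  have hcont : Continuous fun x : ℂ => Metric.infDist x Hset :=
    Metric.continuous_infDist_pt Hset
  obtain ⟨x₀, hx₀K, hmax⟩ := hcomp.exists_isMaxOn hne hcont.continuousOn
  have hzero : Metric.infDist x₀ Hset = 0 := by
    have hx : x₀ ∈ ⋃ i, mainS i '' K := heq ▸ hx₀K
    obtain ⟨i, y, hyK, hxy⟩ := by simpa using hx
    obtain ⟨z, hzH, hz⟩ := Hset_closed.exists_infDist_eq_dist Hset_nonempty y
    have key : Metric.infDist x₀ Hset ≤ 1 / 2 * Metric.infDist x₀ Hset := by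
      calc Metric.infDist x₀ Hset = Metric.infDist (mainS i y) Hset := by rw [hxy]
        _ ≤ dist (mainS i y) (mainS i z) := Metric.infDist_le_dist_of_mem (mainS_maps i hzH)
        _ ≤ 1 / 2 * dist y z := mainS_lip i y z
        _ = 1 / 2 * Metric.infDist y Hset := by rw [hz]
        _ ≤ 1 / 2 * Metric.infDist x₀ Hset := by
            have h' : Metric.infDist y Hset ≤ Metric.infDist x₀ Hset := hmax hyK
            linarith
    have := Metric.infDist_nonneg (x := x₀) (s := Hset)
    linarith
  intro x hxK
  have hx0 : Metric.infDist x Hset = 0 := by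
    have h1 : Metric.infDist x Hset ≤ Metric.infDist x₀ Hset := hmax hxK
    have := Metric.infDist_nonneg (x := x) (s := Hset)
    linarith
  exact (Hset_closed.mem_iff_infDist_zero Hset_nonempty).2 hx0

lemma mem_seg (z : ℂ) :
    z ∈ segment ℝ (0 : ℂ) 4 ↔ z.im = 0 ∧ 0 ≤ z.re ∧ z.re ≤ 4 := by
  rw [segment_eq_image]
  constructor
  · rintro ⟨θ, ⟨h0, h1⟩, rfl⟩
    simp only [smul_zero, zero_add, Complex.real_smul, Complex.mul_re, Complex.mul_im,
      Complex.ofReal_re, Complex.ofReal_im]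
    norm_num
    constructor
    · linarith
    · linarith
  · rintro ⟨him, h0, h4⟩
    refine ⟨z.re / 4, ⟨by linarith, by linarith⟩, ?_⟩
    apply Complex.ext <;>
      simp [Complex.real_smul, Complex.mul_re, Complex.mul_im, him] <;> ring

/-- The maximal segment in `K` containing the base `[(0,0),(4,0)]` is the
base itself. -/
theorem stmt13 (K : Set ℂ) (hK : IsAttractor mainS K) :
    ∀ p q : ℂ, segment ℝ (0 : ℂ) 4 ⊆ segment ℝ p q → segment ℝ p q ⊆ K →
      segment ℝ p q = segment ℝ (0 : ℂ) 4 := by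
  intro p q hsub hKin
  have hKH := K_subset_H K hK
  have hpq : segment ℝ p q ⊆ Hset := fun x hx => hKH (hKin hx)
  have h0 : (0 : ℂ) ∈ segment ℝ p q := hsub (left_mem_segment ℝ _ _)
  have h4 : (4 : ℂ) ∈ segment ℝ p q := hsub (right_mem_segment ℝ _ _)
  obtain ⟨a, b, ha, hb, hab, h0eq⟩ := h0
  obtain ⟨c, d, hc, hd, hcd, h4eq⟩ := h4
  have h0im : a * p.im + b * q.im = 0 := by
    have := congrArg Complex.im h0eq
    simpa [Complex.add_im, Complex.smul_im] using this
  have h4im : c * p.im + d * q.im = 0 := by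
    have := congrArg Complex.im h4eq
    simpa [Complex.add_im, Complex.smul_im] using this
  have h0re : a * p.re + b * q.re = 0 := by
    have := congrArg Complex.re h0eq
    simpa [Complex.add_re, Complex.smul_re] using this
  have h4re : c * p.re + d * q.re = 4 := by
    have := congrArg Complex.re h4eq
    simpa [Complex.add_re, Complex.smul_re] using this
  have hac : a ≠ c := by
    intro h
    have hbd : b = d := by linarith
    rw [h, hbd] at h0re
    linarith
  have hpiqi : p.im = q.im := by
    have hmul : (a - c) * (p.im - q.im) = 0 := by
      linear_combination h0im - h4im + q.im * hcd - q.im * hab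
    rcases mul_eq_zero.mp hmul with h | h
    · exact absurd (sub_eq_zero.mp h) hac
    · exact sub_eq_zero.mp h
  have hpim : p.im = 0 := by
    rw [← hpiqi] at h0im
    have : (a + b) * p.im = 0 := by linarith
    rw [hab] at this
    linarith
  have hqim : q.im = 0 := hpiqi ▸ hpim
  have hpH : p ∈ Hset := hpq (left_mem_segment ℝ _ _)
  have hqH : q ∈ Hset := hpq (right_mem_segment ℝ _ _)
  have hp : p ∈ segment ℝ (0 : ℂ) 4 := (mem_seg p).2 ⟨hpim, hpH.1, hpH.2⟩
  have hq : q ∈ segment ℝ (0 : ℂ) 4 := (mem_seg q).2 ⟨hqim, hqH.1, hqH.2⟩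
  exact Subset.antisymm ((convex_segment (0 : ℂ) 4).segment_subset hp hq) hsub
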